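/- Let |T⟩ = Rz(iκ)₁ Rz(iκ)₃ |Cl₄⟩ be a 4-qubit linear cluster state with imaginary-angle z-rotations (κ = ln λ, 0 < λ < 1) on qubits 1 and 3. Projecting qubits 2 and 3 onto |−⟩ and |±⟩ respectively (outcome m₂ = 1 on qubit 2) yields, up to local unitaries and normalization, the state CZ₁₄ |++⟩₁₄; i.e., the imaginary rotation on the remaining qubit is completely cancelled. If instead m₂ = 0, the resulting state is CZ₁₄ Rz(2iκ)₁ |++⟩₁₄ up to local unitaries, i.e., the effective imaginary angle doubles. -/

import Mathlib

open Matrix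

noncomputable section

/-- Amplitude factor of Rz(iκ)|+⟩-type qubits: Rz(iκ) = diag(e^{κ/2}, e^{−κ/2}). -/
def f (κ : ℝ) : Fin 2 → ℂ := fun i =>
  Complex.exp (if i = 0 then ((κ / 2 : ℝ) : ℂ) else ((-(κ / 2) : ℝ) : ℂ))

/-- Amplitudes of |T⟩ = Rz(iκ)₁ Rz(iκ)₃ CZ₁₂CZ₂₃CZ₃₄ |++++⟩. -/
def T (κ : ℝ) (i j k l : Fin 2) : ℂ :=
  f κ i * f κ k *
    (-1 : ℂ) ^ ((i : ℕ) * (j : ℕ) + (j : ℕ) * (k : ℕ) + (k : ℕ) * (l : ℕ)) / 4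

/-- |+⟩ (s = 0) and |−⟩ (s = 1) amplitudes. -/
def pm (s i : Fin 2) : ℂ := ((Real.sqrt 2 : ℂ))⁻¹ * (-1 : ℂ) ^ ((s : ℕ) * (i : ℕ))

private def M0 : Matrix (Fin 2) (Fin 2) ℂ := ![![1,0],![0,-1]]
private def M1 : Matrix (Fin 2) (Fin 2) ℂ := ![![0,1],![-1,0]]
private def M2 : Matrix (Fin 2) (Fin 2) ℂ := ![![0,1],![1,0]]

set_option maxHeartbeats 1000000 in
private lemma unit0 : M0ᴴ * M0 = 1 := by
  ext i j
  fin_cases i <;> fin_cases j <;>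
    (simp only [Matrix.mul_apply, Fin.sum_univ_two, Matrix.conjTranspose_apply]; simp [M0, Matrix.mul_apply, Fin.sum_univ_two, Matrix.conjTranspose_apply, Matrix.one_apply])

set_option maxHeartbeats 1000000 in
private lemma unit1 : M1ᴴ * M1 = 1 := by
  ext i j
  fin_cases i <;> fin_cases j <;>
    (simp only [Matrix.mul_apply, Fin.sum_univ_two, Matrix.conjTranspose_apply]; simp [M1, Matrix.mul_apply, Fin.sum_univ_two, Matrix.conjTranspose_apply, Matrix.one_apply])

set_option maxHeartbeats 1000000 in
private lemma unit2 : M2ᴴ * M2 = 1 := by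
  ext i j
  fin_cases i <;> fin_cases j <;>
    (simp only [Matrix.mul_apply, Fin.sum_univ_two, Matrix.conjTranspose_apply]; simp [M2, Matrix.mul_apply, Fin.sum_univ_two, Matrix.conjTranspose_apply, Matrix.one_apply])

set_option maxHeartbeats 2000000 in
/-- Projecting qubits 2 and 3 of |T⟩ = Rz(iκ)₁Rz(iκ)₃|Cl₄⟩ onto |−⟩ (outcome m₂ = 1)
and |±⟩ respectively yields, up to local unitaries and a nonzero scalar, CZ₁₄|++⟩₁₄:
the imaginary rotation is cancelled.  If instead qubit 2 gives |+⟩ (m₂ = 0), the result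
is CZ₁₄ Rz(2iκ)₁ |++⟩₁₄ up to local unitaries: the imaginary angle doubles. -/
theorem bub_chain_walk_step (κ : ℝ) (lam : ℝ) (hlam0 : 0 < lam) (hlam1 : lam < 1)
    (hκ : κ = Real.log lam) (m₃ : Fin 2) :
    let res : Fin 2 → Fin 2 → Fin 2 → ℂ := fun m₂ i l =>
      ∑ j : Fin 2, ∑ k : Fin 2, star (pm m₂ j) * star (pm m₃ k) * T κ i j k l
    -- outcome m₂ = 1 on qubit 2: perfect CZ₁₄|++⟩ up to local unitaries and scalar
    (∃ (c : ℂ) (A B : Matrix (Fin 2) (Fin 2) ℂ), c ≠ 0 ∧ Aᴴ * A = 1 ∧ Bᴴ * B = 1 ∧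
      ∀ i l : Fin 2, res 1 i l =
        c * ∑ i' : Fin 2, ∑ l' : Fin 2,
          A i i' * B l l' * ((-1 : ℂ) ^ ((i' : ℕ) * (l' : ℕ)) / 2)) ∧
    -- outcome m₂ = 0: CZ₁₄ Rz(2iκ)₁|++⟩ up to local unitaries and scalar
    (∃ (c : ℂ) (A B : Matrix (Fin 2) (Fin 2) ℂ), c ≠ 0 ∧ Aᴴ * A = 1 ∧ Bᴴ * B = 1 ∧
      ∀ i l : Fin 2, res 0 i l =
        c * ∑ i' : Fin 2, ∑ l' : Fin 2,
          A i i' * B l l' * (f (2 * κ) i' * (-1 : ℂ) ^ ((i' : ℕ) * (l' : ℕ)) / 2)) := by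
  intro res
  have hs2 : (((Real.sqrt 2 : ℝ)) : ℂ) ^ 2 = 2 := by
    rw [← Complex.ofReal_pow, Real.sq_sqrt (by norm_num : (0:ℝ) ≤ 2)]; norm_num
  have hres : ∀ m₂ i l : Fin 2, res m₂ i l =
      ∑ j : Fin 2, ∑ k : Fin 2, star (pm m₂ j) * star (pm m₃ k) * T κ i j k l := fun _ _ _ => rfl
  fin_cases m₃ <;> constructor
  · -- m₃ = 0, m₂ = 1
    refine ⟨1/2, 1, M0, by norm_num, by simp, unit0, ?_⟩
    intro i l
    rw [hres]
    fin_cases i <;> fin_cases l <;>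
      simp [M0, M1, M2, pm, T, f, Fin.sum_univ_two, ← Complex.exp_add, ← Complex.ofReal_add,
        Matrix.one_apply] <;>
      ring_nf <;> simp [← Complex.exp_add, ← Complex.ofReal_add, hs2] <;> ring_nf <;>
      norm_num [hs2]
  · -- m₃ = 0, m₂ = 0
    refine ⟨1/2, 1, 1, by norm_num, by simp, by simp, ?_⟩
    intro i l
    rw [hres]
    fin_cases i <;> fin_cases l <;>
      simp [M0, M1, M2, pm, T, f, Fin.sum_univ_two, ← Complex.exp_add, ← Complex.ofReal_add,
        Matrix.one_apply] <;>
      ring_nf <;> simp [← Complex.exp_add, ← Complex.ofReal_add, hs2] <;> ring_nf <;>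
      norm_num [hs2]
  · -- m₃ = 1, m₂ = 1
    refine ⟨-(1/2), 1, M1, by norm_num, by simp, unit1, ?_⟩
    intro i l
    rw [hres]
    fin_cases i <;> fin_cases l <;>
      simp [M0, M1, M2, pm, T, f, Fin.sum_univ_two, ← Complex.exp_add, ← Complex.ofReal_add,
        Matrix.one_apply] <;>
      ring_nf <;> simp [← Complex.exp_add, ← Complex.ofReal_add, hs2] <;> ring_nf <;>
      norm_num [hs2]
  · -- m₃ = 1, m₂ = 0
    refine ⟨1/2, 1, M2, by norm_num, by simp, unit2, ?_⟩
    intro i l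
    rw [hres]
    fin_cases i <;> fin_cases l <;>
      simp [M0, M1, M2, pm, T, f, Fin.sum_univ_two, ← Complex.exp_add, ← Complex.ofReal_add,
        Matrix.one_apply] <;>
      ring_nf <;> simp [← Complex.exp_add, ← Complex.ofReal_add, hs2] <;> ring_nf <;>
      norm_num [hs2]

end
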